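/- Tightness is preserved under reset of a non-reference clock: if M is tight and ℓ ≠ n, then M[x_ℓ ← 0], defined by (M[x_ℓ ← 0])_{i,j} = M_{i_ℓ, j_ℓ} with k_ℓ = k for k ≠ ℓ and ℓ_ℓ = 0, is tight. -/
import Mathlib


open scoped Classical

/-- The set `V = ({<,≤} × ℝ) ∪ {(<,∞)}` of DBM entries: a strictness flag
(`true` means strict `<`, `false` means non-strict `≤`) together with a bound in
`ℝ ∪ {∞}`, where an infinite bound must be strict. -/
abbrev V : Type := {v : Bool × WithTop ℝ // v.2 = ⊤ → v.1 = true}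

namespace V

def strict (v : V) : Bool := v.1.1
def bound (v : V) : WithTop ℝ := v.1.2

/-- The order `≤_V`: `(≺,m) ≤_V (≺',m')` iff `m < m'`, or `m = m'` and
(`≺` is `<` or `≺'` is `≤`). -/
def le (a b : V) : Prop :=
  a.bound < b.bound ∨ (a.bound = b.bound ∧ (a.strict = true ∨ b.strict = false))

/-- Addition on `V`: bounds add (with `m + ∞ = ∞`), and the resulting flag is
non-strict iff both flags are non-strict. -/
noncomputable def add (a b : V) : V :=
  ⟨(a.strict || b.strict, a.bound + b.bound), by
    intro h
    rcases WithTop.add_eq_top.mp h with h' | h'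
    · simp [strict, a.2 h']
    · simp [strict, b.2 h']⟩

/-- Minimum with respect to `≤_V`. -/
noncomputable def min (a b : V) : V := if le a b then a else b

/-- The trivial entry `(<,∞)`. -/
def inf : V := ⟨(true, ⊤), fun _ => rfl⟩

/-- The non-strict entry `(≤, r)` for a real bound `r`. -/
def nonstrict (r : ℝ) : V := ⟨(false, (r : WithTop ℝ)), by simp⟩

end V

/-- A DBM over clocks `x_0, …, x_n` is an `(n+1) × (n+1)` matrix with entries in `V`. -/
def DBM (n : ℕ) : Type := Fin (n+1) → Fin (n+1) → V

/-- Canonical form: `M_{i,k} ≤_V M_{i,j} + M_{j,k}` for all `i,j,k`. -/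
def Canonical {n : ℕ} (M : DBM n) : Prop :=
  ∀ i j k, (M i k).le ((M i j).add (M j k))

/-- Satisfaction of a single difference constraint by a real number. -/
def Vsat (v : V) (x : ℝ) : Prop :=
  if v.strict = true then (x : WithTop ℝ) < v.bound else (x : WithTop ℝ) ≤ v.bound

/-- The zone `⟦M⟧`: nonnegative valuations `ν` with `ν 0 = 0` satisfying
`ν i − ν j ≺_{i,j} m_{i,j}` for all `i, j`. -/
def zone {n : ℕ} (M : DBM n) : Set (Fin (n+1) → ℝ) :=
  {ν | ν 0 = 0 ∧ (∀ i, 0 ≤ ν i) ∧ ∀ i j, Vsat (M i j) (ν i - ν j)}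

/-- An atomic DBM: all entries are `(<,∞)` except possibly the entry at `(p,q)`. -/
def Atomic {n : ℕ} (M : DBM n) (p q : Fin (n+1)) : Prop :=
  ∀ i j, ¬(i = p ∧ j = q) → M i j = V.inf

/-- Canonical intersection of `M` with the atomic DBM whose non-trivial entry is
`v` at position `(p,q)`: `M''_{i,j} = min(M_{i,j}, M_{i,p} + v + M_{q,j})`. -/
noncomputable def interAt {n : ℕ} (M : DBM n) (p q : Fin (n+1)) (v : V) : DBM n :=
  fun i j => (M i j).min (((M i p).add v).add (M q j))

/-- Time elapse: entries `M_{i,0}` for `i ≠ 0` become `(<,∞)`. -/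
def elapse {n : ℕ} (M : DBM n) : DBM n :=
  fun i j => if i ≠ 0 ∧ j = 0 then V.inf else M i j

/-- Reset of clock `x_ℓ`: substitute index `0` for index `ℓ`. -/
def reset {n : ℕ} (M : DBM n) (l : Fin (n+1)) : DBM n :=
  fun i j => M (if i = l then 0 else i) (if j = l then 0 else j)

/-- The numeric bound of `v` is neither an integer nor `∞`. -/
def NotIntEntry (v : V) : Prop :=
  v.bound ≠ ⊤ ∧ ∀ z : ℤ, v.bound ≠ ((z : ℝ) : WithTop ℝ)

/-- Tightness: `M_{i,j} = M_{i,n} + M_{n,j}` whenever `m_{i,j} ∉ ℤ ∪ {∞}`. -/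
def Tight {n : ℕ} (M : DBM n) : Prop :=
  ∀ i j, NotIntEntry (M i j) → M i j = (M i (Fin.last n)).add ((M (Fin.last n) j))


/-- tightness is preserved under reset of a non-reference clock
`x_ℓ`, `ℓ ≠ n`. -/
theorem stmt12 {n : ℕ} (M : DBM n) (l : Fin (n+1)) (hl : l ≠ Fin.last n)
    (h : Tight M) : Tight (reset M l) := by
  intro i j hnot
  have hn : (Fin.last n = l) = False := eq_false fun h' => hl h'.symm
  simp only [reset, hn, if_false] at hnot ⊢
  exact h _ _ hnot
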